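/- Let c_1, …, c_k, c ∈ ℝ^(2^n) and assume each c_i is tight, i.e. c_i·h ≤ 0 for all h ∈ cl Γ_n^*. Then the following are equivalent: (1) for all h ∈ cl Γ_n^*, if c_i·h ≥ 0 for all i ∈ {1,…,k} then c·h ≥ 0; (2) for every positive natural number p there exists a natural number q such that for all h ∈ cl Γ_n^*, c·h + (1/p)·h(Fin n) ≥ q·∑_{i=1}^{k} c_i·h, where h(Fin n) denotes the value of h on the full set of all n indices. -/

import Mathlib

/-- The marginal probability `q_α(v)` of the joint outcome `v` of the variables in `α`. -/
noncomputable def marginalProb {n N : ℕ} (p : Fin N → ℝ) (X : Fin n → Fin N → ℕ)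
    (α : Finset (Fin n)) (v : {i // i ∈ α} → ℕ) : ℝ :=
  ∑ ω ∈ Finset.univ.filter (fun ω => ∀ i : {i // i ∈ α}, X i.1 ω = v i), p ω

/-- The base-2 Shannon entropy of the joint marginal distribution on `α`. -/
noncomputable def entropyOn {n N : ℕ} (p : Fin N → ℝ) (X : Fin n → Fin N → ℕ)
    (α : Finset (Fin n)) : ℝ :=
  (∑' v : ({i // i ∈ α} → ℕ), Real.negMulLog (marginalProb p X α v)) / Real.log 2

/-- `h : Finset (Fin n) → ℝ` is entropic if it is the entropy profile of `n` jointly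
distributed random variables on a nonempty finite probability space. -/
def IsEntropic (n : ℕ) (h : Finset (Fin n) → ℝ) : Prop :=
  ∃ (N : ℕ) (p : Fin N → ℝ) (X : Fin n → Fin N → ℕ), 0 < N ∧
    (∀ ω, 0 ≤ p ω) ∧ (∑ ω, p ω) = 1 ∧ ∀ α, h α = entropyOn p X α

/-- The closed convex cone `cl Γ_n^*` of almost entropic vectors. -/
def almostEntropic (n : ℕ) : Set (Finset (Fin n) → ℝ) :=
  closure {h | IsEntropic n h}

namespace Stmt10Aux

open Real Finset Filter Topology

variable {n N : ℕ}

/-- The joint outcome of the variables in `α` at sample point `ω`. -/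
def outc (X : Fin n → Fin N → ℕ) (α : Finset (Fin n)) (ω : Fin N) :
    {i // i ∈ α} → ℕ := fun i => X i.1 ω

lemma marg_eq_sum_filter_outc (p : Fin N → ℝ) (X : Fin n → Fin N → ℕ)
    (α : Finset (Fin n)) (v : {i // i ∈ α} → ℕ) :
    marginalProb p X α v = ∑ ω ∈ Finset.univ.filter (fun ω => outc X α ω = v), p ω := by
  unfold marginalProb
  congr 1
  apply Finset.filter_congr
  intro ω _
  simp only [outc, funext_iff]

lemma marg_nonneg {p : Fin N → ℝ} (hp : ∀ ω, 0 ≤ p ω) (X : Fin n → Fin N → ℕ)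
    (α : Finset (Fin n)) (v : {i // i ∈ α} → ℕ) :
    0 ≤ marginalProb p X α v :=
  Finset.sum_nonneg fun ω _ => hp ω

lemma marg_le_total {p : Fin N → ℝ} (hp : ∀ ω, 0 ≤ p ω) (X : Fin n → Fin N → ℕ)
    (α : Finset (Fin n)) (v : {i // i ∈ α} → ℕ) :
    marginalProb p X α v ≤ ∑ ω, p ω :=
  Finset.sum_le_sum_of_subset_of_nonneg (Finset.filter_subset _ _) (fun ω _ _ => hp ω)

lemma self_le_marg {p : Fin N → ℝ} (hp : ∀ ω, 0 ≤ p ω) (X : Fin n → Fin N → ℕ)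
    (α : Finset (Fin n)) (ω : Fin N) :
    p ω ≤ marginalProb p X α (outc X α ω) := by
  rw [marg_eq_sum_filter_outc]
  apply Finset.single_le_sum (fun x _ => hp x)
  simp

/-- The entropy sum written as a finite sum over the sample space. -/
lemma tsum_negMulLog_eq (p : Fin N → ℝ) (X : Fin n → Fin N → ℕ) (α : Finset (Fin n)) :
    ∑' v : ({i // i ∈ α} → ℕ), Real.negMulLog (marginalProb p X α v)
      = ∑ ω, p ω * (-Real.log (marginalProb p X α (outc X α ω))) := by
  rw [tsum_eq_sum (s := Finset.univ.image (outc X α)) ?_]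
  · refine Finset.sum_image' _ (fun ω _ => ?_)
    have hcongr : ∀ x ∈ Finset.univ.filter (fun x => outc X α x = outc X α ω),
        p x * (-Real.log (marginalProb p X α (outc X α x)))
          = p x * (-Real.log (marginalProb p X α (outc X α ω))) := by
      intro x hx
      rw [(Finset.mem_filter.mp hx).2]
    rw [Finset.sum_congr rfl hcongr, ← Finset.sum_mul, ← marg_eq_sum_filter_outc]
    simp [Real.negMulLog]
  · intro v hv
    have hfe : Finset.univ.filter (fun ω => outc X α ω = v) = ∅ := by
      apply Finset.filter_false_of_mem
      intro x _ hx
      exact hv (Finset.mem_image.mpr ⟨x, Finset.mem_univ x, hx⟩)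
    rw [marg_eq_sum_filter_outc, hfe]
    simp

lemma entropyOn_nonneg {p : Fin N → ℝ} (hp : ∀ ω, 0 ≤ p ω) (hs : ∑ ω, p ω = 1)
    (X : Fin n → Fin N → ℕ) (α : Finset (Fin n)) : 0 ≤ entropyOn p X α := by
  apply div_nonneg _ (Real.log_nonneg one_le_two)
  apply tsum_nonneg
  intro v
  exact Real.negMulLog_nonneg (marg_nonneg hp X α v) (hs ▸ marg_le_total hp X α v)

lemma entropyOn_mono {p : Fin N → ℝ} (hp : ∀ ω, 0 ≤ p ω)
    (X : Fin n → Fin N → ℕ) {α β : Finset (Fin n)} (hαβ : α ⊆ β) :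
    entropyOn p X α ≤ entropyOn p X β := by
  unfold entropyOn
  have hlog2 : (0:ℝ) < Real.log 2 := Real.log_pos one_lt_two
  apply div_le_div_of_nonneg_right _ hlog2.le
  rw [tsum_negMulLog_eq, tsum_negMulLog_eq]
  apply Finset.sum_le_sum
  intro ω _
  rcases eq_or_lt_of_le (hp ω) with h0 | h0
  · rw [← h0]; simp
  · have h1 : 0 < marginalProb p X β (outc X β ω) :=
      lt_of_lt_of_le h0 (self_le_marg hp X β ω)
    have h2 : marginalProb p X β (outc X β ω) ≤ marginalProb p X α (outc X α ω) := by
      rw [marg_eq_sum_filter_outc, marg_eq_sum_filter_outc]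
      apply Finset.sum_le_sum_of_subset_of_nonneg _ (fun x _ _ => hp x)
      intro x hx
      simp only [Finset.mem_filter, Finset.mem_univ, true_and, outc, funext_iff] at hx ⊢
      intro i
      exact hx ⟨i.1, hαβ i.2⟩
    have h3 := Real.log_le_log h1 h2
    nlinarith

lemma entropyOn_empty (p : Fin N → ℝ) (X : Fin n → Fin N → ℕ) (hs : ∑ ω, p ω = 1) :
    entropyOn p X (∅ : Finset (Fin n)) = 0 := by
  unfold entropyOn
  have he : IsEmpty {i : Fin n // i ∈ (∅ : Finset (Fin n))} :=
    ⟨fun i => Finset.notMem_empty i.1 i.2⟩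
  have hv : ∀ v : {i : Fin n // i ∈ (∅ : Finset (Fin n))} → ℕ,
      marginalProb p X ∅ v = 1 := by
    intro v
    unfold marginalProb
    rw [Finset.filter_true_of_mem (fun x _ => fun i => he.elim i)]
    exact hs
  rw [tsum_eq_sum (s := {fun i => he.elim i}) ?_]
  · simp [hv]
  · intro v hv'
    exact absurd (funext fun i => he.elim i) (by simpa using hv')

lemma isEntropic_zero : IsEntropic n (fun _ => 0) := by
  refine ⟨1, fun _ => 1, fun _ _ => 0, one_pos, fun _ => zero_le_one, by simp, fun α => ?_⟩
  show (0:ℝ) = entropyOn (fun _ => 1) (fun _ _ => 0) α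
  unfold entropyOn
  rw [tsum_negMulLog_eq]
  have hm : ∀ ω : Fin 1,
      marginalProb (n := n) (N := 1) (fun _ => (1:ℝ)) (fun _ _ => (0:ℕ)) α
        (outc (fun _ _ => (0:ℕ)) α ω) = 1 := by
    intro ω
    rw [marg_eq_sum_filter_outc]
    have hft : Finset.univ.filter
        (fun x : Fin 1 => outc (n := n) (fun _ _ => (0:ℕ)) α x
          = outc (fun _ _ => (0:ℕ)) α ω) = Finset.univ :=
      Finset.filter_true_of_mem (fun x _ => rfl)
    rw [hft]
    simp
  simp [hm]

lemma entropic_apply_empty {h : Finset (Fin n) → ℝ} (hh : IsEntropic n h) : h ∅ = 0 := by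
  obtain ⟨N, p, X, _, _, hs, hα⟩ := hh
  rw [hα ∅, entropyOn_empty p X hs]

section add

variable {N₁ N₂ : ℕ}

lemma isEntropic_add {h₁ h₂ : Finset (Fin n) → ℝ}
    (H₁ : IsEntropic n h₁) (H₂ : IsEntropic n h₂) :
    IsEntropic n (fun α => h₁ α + h₂ α) := by
  obtain ⟨N₁, p₁, X₁, hN₁, hp₁, hs₁, hα₁⟩ := H₁
  obtain ⟨N₂, p₂, X₂, hN₂, hp₂, hs₂, hα₂⟩ := H₂
  set e : Fin (N₁ * N₂) ≃ Fin N₁ × Fin N₂ := finProdFinEquiv.symm with he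
  set p : Fin (N₁ * N₂) → ℝ := fun ω => p₁ (e ω).1 * p₂ (e ω).2 with hpdef
  set X : Fin n → Fin (N₁ * N₂) → ℕ :=
    fun i ω => Nat.pair (X₁ i (e ω).1) (X₂ i (e ω).2) with hXdef
  have hsum : (∑ ω, p ω) = 1 := by
    rw [← Equiv.sum_comp e.symm p]
    simp only [hpdef, Equiv.apply_symm_apply]
    rw [Fintype.sum_prod_type]
    dsimp only
    rw [← Fintype.sum_mul_sum, hs₁, hs₂, mul_one]
  -- key factorization of marginals
  have hmarg : ∀ (α : Finset (Fin n)) (ω : Fin (N₁ * N₂)),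
      marginalProb p X α (outc X α ω)
        = marginalProb p₁ X₁ α (outc X₁ α (e ω).1)
          * marginalProb p₂ X₂ α (outc X₂ α (e ω).2) := by
    intro α ω
    rw [marg_eq_sum_filter_outc, marg_eq_sum_filter_outc, marg_eq_sum_filter_outc,
      Finset.sum_filter, Finset.sum_filter, Finset.sum_filter,
      ← Equiv.sum_comp e.symm]
    have hterm : ∀ ab : Fin N₁ × Fin N₂,
        (if outc X α (e.symm ab) = outc X α ω then p (e.symm ab) else 0)
          = (if outc X₁ α ab.1 = outc X₁ α (e ω).1 then p₁ ab.1 else 0)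
            * (if outc X₂ α ab.2 = outc X₂ α (e ω).2 then p₂ ab.2 else 0) := by
      intro ab
      have hiff : (outc X α (e.symm ab) = outc X α ω)
          ↔ (outc X₁ α ab.1 = outc X₁ α (e ω).1 ∧ outc X₂ α ab.2 = outc X₂ α (e ω).2) := by
        simp only [outc, funext_iff, hXdef, Equiv.apply_symm_apply, Nat.pair_eq_pair,
          ← forall_and]
      by_cases hc : outc X₁ α ab.1 = outc X₁ α (e ω).1 ∧ outc X₂ α ab.2 = outc X₂ α (e ω).2
      · rw [if_pos (hiff.mpr hc), if_pos hc.1, if_pos hc.2]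
        simp [hpdef]
      · rw [if_neg (fun h => hc (hiff.mp h))]
        rcases not_and_or.mp hc with hc1 | hc2
        · rw [if_neg hc1, zero_mul]
        · rw [if_neg hc2, mul_zero]
    simp only [hterm]
    rw [Fintype.sum_prod_type]
    dsimp only
    rw [Finset.sum_mul]; simp only [Finset.mul_sum]
  refine ⟨N₁ * N₂, p, X, Nat.mul_pos hN₁ hN₂,
    fun ω => mul_nonneg (hp₁ _) (hp₂ _), hsum, fun α => ?_⟩
  show h₁ α + h₂ α = entropyOn p X α
  rw [hα₁ α, hα₂ α]
  unfold entropyOn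
  rw [← add_div]
  congr 1
  rw [tsum_negMulLog_eq, tsum_negMulLog_eq, tsum_negMulLog_eq,
    ← Equiv.sum_comp e.symm
      (fun ω => p ω * (-Real.log (marginalProb p X α (outc X α ω))))]
  have hterm : ∀ ab : Fin N₁ × Fin N₂,
      p (e.symm ab) * (-Real.log (marginalProb p X α (outc X α (e.symm ab))))
        = p₂ ab.2 * (p₁ ab.1 * (-Real.log (marginalProb p₁ X₁ α (outc X₁ α ab.1))))
          + p₁ ab.1 * (p₂ ab.2 * (-Real.log (marginalProb p₂ X₂ α (outc X₂ α ab.2)))) := by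
    intro ab
    rw [hmarg α (e.symm ab)]
    simp only [hpdef, Equiv.apply_symm_apply]
    rcases eq_or_lt_of_le (hp₁ ab.1) with h10 | h10
    · rw [← h10]; ring
    rcases eq_or_lt_of_le (hp₂ ab.2) with h20 | h20
    · rw [← h20]; ring
    have hm1 : 0 < marginalProb p₁ X₁ α (outc X₁ α ab.1) :=
      lt_of_lt_of_le h10 (self_le_marg hp₁ X₁ α ab.1)
    have hm2 : 0 < marginalProb p₂ X₂ α (outc X₂ α ab.2) :=
      lt_of_lt_of_le h20 (self_le_marg hp₂ X₂ α ab.2)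
    rw [Real.log_mul hm1.ne' hm2.ne']
    ring
  simp only [hterm]
  rw [Finset.sum_add_distrib]
  congr 1
  · rw [Fintype.sum_prod_type]
    dsimp only
    refine Finset.sum_congr rfl fun a _ => ?_
    rw [← Finset.sum_mul, hs₂, one_mul]
  · rw [Fintype.sum_prod_type]
    dsimp only
    have hpera : ∀ a ∈ Finset.univ,
        (∑ b, p₁ a * (p₂ b * (-Real.log (marginalProb p₂ X₂ α (outc X₂ α b)))))
          = p₁ a * ∑ b, p₂ b * (-Real.log (marginalProb p₂ X₂ α (outc X₂ α b))) :=
      fun a _ => (Finset.mul_sum _ _ _).symm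
    rw [Finset.sum_congr rfl hpera, ← Finset.sum_mul, hs₁, one_mul]

end add

lemma isEntropic_nsmul {h : Finset (Fin n) → ℝ} (H : IsEntropic n h) :
    ∀ m : ℕ, IsEntropic n (fun α => (m : ℝ) * h α)
  | 0 => by simpa using isEntropic_zero
  | (m + 1) => by
    have := isEntropic_add (isEntropic_nsmul H m) H
    have hfe : (fun α => ((m : ℝ) + 1) * h α) = fun α => (m : ℝ) * h α + h α := by
      funext α; ring
    push_cast
    rw [hfe]
    exact this

lemma isEntropic_dilute {h : Finset (Fin n) → ℝ} (H : IsEntropic n h)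
    {δ : ℝ} (hδ0 : 0 < δ) (hδ1 : δ ≤ 1) :
    IsEntropic n (fun α => if α = ∅ then 0 else
      (Real.negMulLog δ + Real.negMulLog (1 - δ)) / Real.log 2 + δ * h α) := by
  obtain ⟨N, p, X, hN, hp, hs, hα⟩ := H
  set p' : Fin (N + 1) → ℝ := fun ω' => Fin.lastCases (1 - δ) (fun ω => δ * p ω) ω' with hp'def
  set X' : Fin n → Fin (N + 1) → ℕ :=
    fun i ω' => Fin.lastCases 0 (fun ω => X i ω + 1) ω' with hX'def
  have hp'c : ∀ ω : Fin N, p' ω.castSucc = δ * p ω := fun ω => by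
    simp [hp'def]
  have hp'l : p' (Fin.last N) = 1 - δ := by simp [hp'def]
  have hX'c : ∀ i (ω : Fin N), X' i ω.castSucc = X i ω + 1 := fun i ω => by
    simp [hX'def]
  have hX'l : ∀ i, X' i (Fin.last N) = 0 := fun i => by simp [hX'def]
  have hsum : (∑ ω', p' ω') = 1 := by
    rw [Fin.sum_univ_castSucc]
    simp only [hp'c, hp'l]
    rw [← Finset.mul_sum, hs]
    ring
  have hp'nn : ∀ ω', 0 ≤ p' ω' := by
    intro ω'
    induction ω' using Fin.lastCases with
    | last => rw [hp'l]; linarith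
    | cast ω => rw [hp'c]; exact mul_nonneg hδ0.le (hp ω)
  refine ⟨N + 1, p', X', Nat.succ_pos N, hp'nn, hsum, fun α => ?_⟩
  show (if α = ∅ then 0 else
      (Real.negMulLog δ + Real.negMulLog (1 - δ)) / Real.log 2 + δ * h α)
    = entropyOn p' X' α
  by_cases hne : α = ∅
  · rw [if_pos hne, hne, entropyOn_empty p' X' hsum]
  · rw [if_neg hne]
    obtain ⟨i₀, hi₀⟩ := Finset.nonempty_iff_ne_empty.mpr hne
    -- marginal at the `last` atom
    have hmlast : marginalProb p' X' α (outc X' α (Fin.last N)) = 1 - δ := by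
      rw [marg_eq_sum_filter_outc, Finset.sum_filter, Fin.sum_univ_castSucc]
      have hc : ∀ ω : Fin N, outc X' α ω.castSucc ≠ outc X' α (Fin.last N) := by
        intro ω hcon
        have := congrFun hcon ⟨i₀, hi₀⟩
        simp only [outc, hX'c, hX'l] at this
        exact Nat.succ_ne_zero _ this
      rw [Finset.sum_congr rfl (fun ω _ => if_neg (hc ω))]
      simp [hp'l]
    -- marginal at `castSucc` atoms
    have hmcast : ∀ ω : Fin N, marginalProb p' X' α (outc X' α ω.castSucc)
        = δ * marginalProb p X α (outc X α ω) := by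
      intro ω
      rw [marg_eq_sum_filter_outc, marg_eq_sum_filter_outc,
        Finset.sum_filter, Finset.sum_filter, Fin.sum_univ_castSucc]
      have hlastne : outc X' α (Fin.last N) ≠ outc X' α ω.castSucc := by
        intro hcon
        have := congrFun hcon ⟨i₀, hi₀⟩
        simp only [outc, hX'c, hX'l] at this
        exact Nat.succ_ne_zero _ this.symm
      rw [if_neg hlastne, add_zero]
      have hiff : ∀ x : Fin N,
          (outc X' α x.castSucc = outc X' α ω.castSucc) ↔ (outc X α x = outc X α ω) := by
        intro x
        simp only [outc, funext_iff, hX'c]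
        constructor
        · intro hx i; exact Nat.succ_injective (hx i)
        · intro hx i; rw [hx i]
      rw [Finset.mul_sum]
      refine Finset.sum_congr rfl fun x _ => ?_
      by_cases hc : outc X α x = outc X α ω
      · rw [if_pos ((hiff x).mpr hc), if_pos hc, hp'c]
      · rw [if_neg (fun hcon => hc ((hiff x).mp hcon)), if_neg hc, mul_zero]
    -- entropy computation
    rw [hα α]
    unfold entropyOn
    rw [tsum_negMulLog_eq, tsum_negMulLog_eq, Fin.sum_univ_castSucc]
    have hterm : ∀ ω : Fin N,
        p' ω.castSucc * (-Real.log (marginalProb p' X' α (outc X' α ω.castSucc)))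
          = (-Real.log δ) * (δ * p ω)
            + δ * (p ω * (-Real.log (marginalProb p X α (outc X α ω)))) := by
      intro ω
      rw [hp'c, hmcast]
      rcases eq_or_lt_of_le (hp ω) with h0 | h0
      · rw [← h0]; ring
      · have hm : 0 < marginalProb p X α (outc X α ω) :=
          lt_of_lt_of_le h0 (self_le_marg hp X α ω)
        rw [Real.log_mul hδ0.ne' hm.ne']
        ring
    simp only [hterm]
    rw [Finset.sum_add_distrib]
    have e1 : (∑ ω, (-Real.log δ) * (δ * p ω)) = Real.negMulLog δ := by
      rw [← Finset.mul_sum, ← Finset.mul_sum, hs, mul_one, Real.negMulLog]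
      ring
    have e2 : (∑ ω, δ * (p ω * (-Real.log (marginalProb p X α (outc X α ω)))))
        = δ * ∑ ω, p ω * (-Real.log (marginalProb p X α (outc X α ω))) :=
      (Finset.mul_sum _ _ _).symm
    rw [e1, e2, hp'l, hmlast]
    have hlog2 : Real.log 2 ≠ 0 := (Real.log_pos one_lt_two).ne'
    simp only [Real.negMulLog]
    field_simp
    ring

lemma smul_mem_almostEntropic {h : Finset (Fin n) → ℝ} (hh : h ∈ almostEntropic n)
    {lam : ℝ} (hl : 0 ≤ lam) : (fun α => lam * h α) ∈ almostEntropic n := by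
  rcases eq_or_lt_of_le hl with h0 | h0
  · have hz : (fun α : Finset (Fin n) => lam * h α) = fun _ => (0:ℝ) := by
      funext α; rw [← h0]; ring
    rw [hz]
    exact subset_closure isEntropic_zero
  · have key : ∀ g : Finset (Fin n) → ℝ, IsEntropic n g →
        (fun α => lam * g α) ∈ almostEntropic n := by
      intro g hg
      set K : ℕ := ⌈lam⌉₊ with hK
      have hKpos : 0 < K := Nat.ceil_pos.mpr h0
      have hden : ∀ m : ℕ, (0:ℝ) < ((m + K : ℕ) : ℝ) := by
        intro m
        have : 0 < m + K := Nat.add_pos_right m hKpos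
        exact_mod_cast this
      have hδpos : ∀ m : ℕ, 0 < lam / ((m + K : ℕ) : ℝ) := fun m => div_pos h0 (hden m)
      have hδle : ∀ m : ℕ, lam / ((m + K : ℕ) : ℝ) ≤ 1 := by
        intro m
        rw [div_le_one (hden m)]
        calc lam ≤ (K : ℝ) := Nat.le_ceil lam
          _ ≤ ((m + K : ℕ) : ℝ) := by exact_mod_cast Nat.le_add_left K m
      set seq : ℕ → Finset (Fin n) → ℝ := fun m α => if α = ∅ then 0 else
        (Real.negMulLog (lam / ((m + K : ℕ) : ℝ))
          + Real.negMulLog (1 - lam / ((m + K : ℕ) : ℝ))) / Real.log 2 + lam * g α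
        with hseq
      have hseqmem : ∀ m, IsEntropic n (seq m) := by
        intro m
        have hd := isEntropic_dilute (isEntropic_nsmul hg (m + K)) (hδpos m) (hδle m)
        have hfe : (fun α : Finset (Fin n) => if α = ∅ then 0 else
            (Real.negMulLog (lam / ((m + K : ℕ) : ℝ))
              + Real.negMulLog (1 - lam / ((m + K : ℕ) : ℝ))) / Real.log 2
              + lam / ((m + K : ℕ) : ℝ) * (((m + K : ℕ) : ℝ) * g α)) = seq m := by
          funext α
          rw [hseq]
          dsimp only
          by_cases hα : α = ∅
          · simp [hα]
          · rw [if_neg hα, if_neg hα]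
            congr 1
            field_simp
        rwa [hfe] at hd
      have hconv : Filter.Tendsto seq Filter.atTop (nhds (fun α => lam * g α)) := by
        rw [tendsto_pi_nhds]
        intro α
        by_cases hα : α = ∅
        · have hg0 : g ∅ = 0 := entropic_apply_empty hg
          simp only [hseq, hα, if_pos, hg0, mul_zero]
          exact tendsto_const_nhds
        · simp only [hseq, if_neg hα]
          have h1 : Filter.Tendsto (fun m : ℕ => lam / ((m + K : ℕ) : ℝ))
              Filter.atTop (nhds 0) := by
            apply Filter.Tendsto.div_atTop tendsto_const_nhds
            exact tendsto_natCast_atTop_atTop.comp (Filter.tendsto_add_atTop_nat K)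
          have h2 : Continuous (fun δ : ℝ =>
              (Real.negMulLog δ + Real.negMulLog (1 - δ)) / Real.log 2) := by
            apply Continuous.div_const
            exact Real.continuous_negMulLog.add
              (Real.continuous_negMulLog.comp (continuous_const.sub continuous_id))
          have h3 := (h2.tendsto 0).comp h1
          have h4 : (Real.negMulLog 0 + Real.negMulLog (1 - 0)) / Real.log 2 = 0 := by
            simp
          rw [h4] at h3
          have h5 := h3.add (tendsto_const_nhds (x := lam * g α))
          rw [zero_add] at h5
          exact h5
      exact mem_closure_of_tendsto hconv (Filter.Eventually.of_forall hseqmem)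
    have cont : Continuous (fun g : Finset (Fin n) → ℝ => fun α => lam * g α) := by
      apply continuous_pi
      intro α
      exact continuous_const.mul (continuous_apply α)
    have := map_mem_closure cont hh (fun g hg => key g hg)
    simpa [almostEntropic, closure_closure] using this

lemma almostEntropic_bounds {h : Finset (Fin n) → ℝ} (hh : h ∈ almostEntropic n) :
    ∀ α, 0 ≤ h α ∧ h α ≤ h Finset.univ := by
  have hsub : {g : Finset (Fin n) → ℝ | IsEntropic n g}
      ⊆ {g : Finset (Fin n) → ℝ | ∀ α, 0 ≤ g α ∧ g α ≤ g Finset.univ} := by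
    rintro g ⟨N, p, X, hN, hp, hs, hα⟩ α
    rw [hα α, hα Finset.univ]
    exact ⟨entropyOn_nonneg hp hs X α, entropyOn_mono hp X (Finset.subset_univ α)⟩
  have hcl : IsClosed {g : Finset (Fin n) → ℝ | ∀ α, 0 ≤ g α ∧ g α ≤ g Finset.univ} := by
    have hrw : {g : Finset (Fin n) → ℝ | ∀ α, 0 ≤ g α ∧ g α ≤ g Finset.univ}
        = ⋂ α : Finset (Fin n),
          ({g : Finset (Fin n) → ℝ | 0 ≤ g α} ∩ {g | g α ≤ g Finset.univ}) := by
      ext g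
      simp [Set.mem_iInter, forall_and]
    rw [hrw]
    exact isClosed_iInter fun α =>
      (isClosed_le continuous_const (continuous_apply α)).inter
        (isClosed_le (continuous_apply α) (continuous_apply _))
  exact closure_minimal hsub hcl hh

end Stmt10Aux

theorem stmt10 (n : ℕ) (hn : 1 ≤ n) (k : ℕ)
    (c : Fin k → Finset (Fin n) → ℝ) (c₀ : Finset (Fin n) → ℝ)
    (htight : ∀ i : Fin k, ∀ h ∈ almostEntropic n, (∑ α, c i α * h α) ≤ 0) :
    (∀ h ∈ almostEntropic n,
        (∀ i : Fin k, 0 ≤ ∑ α, c i α * h α) → 0 ≤ ∑ α, c₀ α * h α) ↔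
    (∀ p : ℕ, 0 < p → ∃ q : ℕ, ∀ h ∈ almostEntropic n,
        (q : ℝ) * (∑ i : Fin k, ∑ α, c i α * h α) ≤
          (∑ α, c₀ α * h α) + (1 / (p : ℝ)) * h Finset.univ) := by
  open Stmt10Aux in
  constructor
  · -- (1) → (2)
    intro H1 p hp
    by_contra hcon
    push_neg at hcon
    choose f hfmem hflt using hcon
    have hbnds := fun q => Stmt10Aux.almostEntropic_bounds (hfmem q)
    have h1p : (0:ℝ) < 1 / (p:ℝ) := by
      have : (0:ℝ) < (p:ℝ) := by exact_mod_cast hp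
      positivity
    have htpos : ∀ q, 0 < f q Finset.univ := by
      intro q
      rcases lt_or_eq_of_le (hbnds q Finset.univ).1 with h | h
      · exact h
      · exfalso
        have hzero : ∀ α, f q α = 0 := fun α =>
          le_antisymm (le_of_le_of_eq (hbnds q α).2 h.symm) (hbnds q α).1
        have := hflt q
        simp only [hzero, mul_zero, Finset.sum_const_zero, add_zero, zero_add] at this
        exact lt_irrefl 0 this
    set g : ℕ → Finset (Fin n) → ℝ := fun q α => (f q Finset.univ)⁻¹ * f q α with hg
    have hgmem : ∀ q, g q ∈ almostEntropic n := fun q =>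
      Stmt10Aux.smul_mem_almostEntropic (hfmem q) (inv_nonneg.mpr (htpos q).le)
    have hguniv : ∀ q, g q Finset.univ = 1 := fun q =>
      inv_mul_cancel₀ (htpos q).ne'
    have hgbnds : ∀ q α, 0 ≤ g q α ∧ g q α ≤ 1 := by
      intro q α
      have := Stmt10Aux.almostEntropic_bounds (hgmem q) α
      rwa [hguniv q] at this
    have hlin : ∀ (d : Finset (Fin n) → ℝ) q,
        (∑ α, d α * g q α) = (f q Finset.univ)⁻¹ * ∑ α, d α * f q α := by
      intro d q
      rw [Finset.mul_sum]
      exact Finset.sum_congr rfl fun α _ => by rw [hg]; ring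
    have hSlin : ∀ q, (∑ i : Fin k, ∑ α, c i α * g q α)
        = (f q Finset.univ)⁻¹ * ∑ i : Fin k, ∑ α, c i α * f q α := by
      intro q
      rw [Finset.mul_sum]
      exact Finset.sum_congr rfl fun i _ => hlin (c i) q
    have hglt : ∀ q : ℕ, (∑ α, c₀ α * g q α) + 1 / (p:ℝ)
        < (q:ℝ) * ∑ i : Fin k, ∑ α, c i α * g q α := by
      intro q
      have h0 := htpos q
      have h2 := (mul_lt_mul_iff_right₀ (inv_pos.mpr h0)).mpr (hflt q)
      rw [mul_add] at h2
      have e1 : (f q Finset.univ)⁻¹ * (1 / (p:ℝ) * f q Finset.univ) = 1 / (p:ℝ) := by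
        field_simp
      have e2 : (f q Finset.univ)⁻¹ * ((q:ℝ) * ∑ i : Fin k, ∑ α, c i α * f q α)
          = (q:ℝ) * ((f q Finset.univ)⁻¹ * ∑ i : Fin k, ∑ α, c i α * f q α) := by
        ring
      rw [e1, e2] at h2
      rw [hlin c₀ q, hSlin q]
      exact h2
    -- tightness facts
    have hSle : ∀ x ∈ almostEntropic n, (∑ i : Fin k, ∑ α, c i α * x α) ≤ 0 :=
      fun x hx => Finset.sum_nonpos fun i _ => htight i x hx
    have hL0lt : ∀ q, (∑ α, c₀ α * g q α) < -(1 / (p:ℝ)) := by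
      intro q
      have h1 := hglt q
      have h2 : (q:ℝ) * ∑ i : Fin k, ∑ α, c i α * g q α ≤ 0 :=
        mul_nonpos_of_nonneg_of_nonpos (Nat.cast_nonneg q) (hSle _ (hgmem q))
      linarith
    -- compactness
    set K : Set (Finset (Fin n) → ℝ) := almostEntropic n ∩ {x | x Finset.univ = 1}
      with hKdef
    have hKcompact : IsCompact K := by
      apply IsCompact.of_isClosed_subset
        (isCompact_Icc (a := fun _ : Finset (Fin n) => (0:ℝ)) (b := fun _ => (1:ℝ)))
      · exact isClosed_closure.inter (isClosed_eq (continuous_apply _) continuous_const)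
      · rintro x ⟨hx1, hx2⟩
        rw [Set.mem_Icc]
        constructor
        · intro α
          exact (Stmt10Aux.almostEntropic_bounds hx1 α).1
        · intro α
          have := (Stmt10Aux.almostEntropic_bounds hx1 α).2
          rw [hx2] at this
          exact this
    obtain ⟨gs, hgsK, φ, hφ, hconv⟩ :=
      hKcompact.tendsto_subseq (x := g) (fun q => ⟨hgmem q, hguniv q⟩)
    have contL : ∀ d : Finset (Fin n) → ℝ,
        Continuous fun x : Finset (Fin n) → ℝ => ∑ α, d α * x α := fun d =>
      continuous_finset_sum _ fun α _ => continuous_const.mul (continuous_apply α)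
    -- limit of the objective
    have hL0gs : (∑ α, c₀ α * gs α) ≤ -(1 / (p:ℝ)) := by
      have hc := ((contL c₀).tendsto gs).comp hconv
      exact le_of_tendsto hc (Filter.Eventually.of_forall fun j => (hL0lt (φ j)).le)
    -- lower bound for the antecedent sum
    set C : ℝ := ∑ α, |c₀ α| with hC
    have hCnn : 0 ≤ C := Finset.sum_nonneg fun α _ => abs_nonneg _
    have hCbound : ∀ q, -C ≤ ∑ α, c₀ α * g q α := by
      intro q
      have hterm : ∀ α ∈ Finset.univ, -|c₀ α| ≤ c₀ α * g q α := by
        intro α _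
        have hb := hgbnds q α
        have habs : |c₀ α * g q α| ≤ |c₀ α| := by
          rw [abs_mul]
          apply mul_le_of_le_one_right (abs_nonneg _)
          rw [abs_le]
          exact ⟨by linarith [hb.1], hb.2⟩
        have := neg_abs_le (c₀ α * g q α)
        calc -|c₀ α| ≤ -|c₀ α * g q α| := by linarith
          _ ≤ c₀ α * g q α := neg_abs_le _
      calc -C = ∑ α, -|c₀ α| := by rw [hC, ← Finset.sum_neg_distrib]
        _ ≤ ∑ α, c₀ α * g q α := Finset.sum_le_sum hterm
    have hSlb : ∀ q : ℕ, 1 ≤ q → -C / (q:ℝ) ≤ ∑ i : Fin k, ∑ α, c i α * g q α := by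
      intro q hq
      have hqpos : (0:ℝ) < (q:ℝ) := by exact_mod_cast hq
      rw [div_le_iff₀ hqpos]
      have h1 := hglt q
      have h2 := hCbound q
      nlinarith
    -- limit of the antecedent sum
    have hSgs : 0 ≤ ∑ i : Fin k, ∑ α, c i α * gs α := by
      have hScont : Continuous fun x : Finset (Fin n) → ℝ =>
          ∑ i : Fin k, ∑ α, c i α * x α :=
        continuous_finset_sum _ fun i _ => contL (c i)
      have hc := (hScont.tendsto gs).comp hconv
      have hz : Filter.Tendsto (fun j : ℕ => -C / ((φ j : ℕ) : ℝ))
          Filter.atTop (nhds 0) := by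
        apply Filter.Tendsto.div_atTop tendsto_const_nhds
        exact tendsto_natCast_atTop_atTop.comp hφ.tendsto_atTop
      refine le_of_tendsto_of_tendsto hz hc ?_
      filter_upwards [Filter.eventually_ge_atTop 1] with j hj
      exact hSlb (φ j) (le_trans hj (hφ.le_apply))
    have hgsAE : gs ∈ almostEntropic n := hgsK.1
    have hipos : ∀ i : Fin k, 0 ≤ ∑ α, c i α * gs α := by
      intro i
      have h1 : ∑ j ∈ Finset.univ.erase i, ∑ α, c j α * gs α ≤ 0 :=
        Finset.sum_nonpos fun j _ => htight j gs hgsAE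
      have h2 : (∑ α, c i α * gs α) + ∑ j ∈ Finset.univ.erase i, ∑ α, c j α * gs α
          = ∑ j : Fin k, ∑ α, c j α * gs α :=
        Finset.add_sum_erase Finset.univ (fun j => ∑ α, c j α * gs α) (Finset.mem_univ i)
      linarith
    have := H1 gs hgsAE hipos
    linarith
  · -- (2) → (1)
    intro H2 h hmem hpos
    have hS0 : (∑ i : Fin k, ∑ α, c i α * h α) = 0 :=
      le_antisymm (Finset.sum_nonpos fun i _ => htight i h hmem)
        (Finset.sum_nonneg fun i _ => hpos i)
    have hu0 : 0 ≤ h Finset.univ := (Stmt10Aux.almostEntropic_bounds hmem Finset.univ).1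
    by_contra hneg
    push_neg at hneg
    have hL0 : 0 < -(∑ α, c₀ α * h α) := by linarith
    obtain ⟨m, hm⟩ := exists_nat_gt (h Finset.univ / (-(∑ α, c₀ α * h α)))
    obtain ⟨q, hq⟩ := H2 (m + 1) (Nat.succ_pos m)
    have hqh := hq h hmem
    rw [hS0, mul_zero] at hqh
    have hp1 : (0:ℝ) < ((m + 1 : ℕ) : ℝ) := by positivity
    have hm1 : h Finset.univ < -(∑ α, c₀ α * h α) * ((m + 1 : ℕ) : ℝ) := by
      rw [div_lt_iff₀ hL0] at hm
      have hcast : (m:ℝ) ≤ ((m + 1 : ℕ) : ℝ) := by push_cast; linarith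
      nlinarith
    have h2 : 1 / ((m + 1 : ℕ) : ℝ) * h Finset.univ < -(∑ α, c₀ α * h α) := by
      rw [div_mul_eq_mul_div, one_mul, div_lt_iff₀ hp1]
      linarith
    linarith
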